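/- (Integration by parts for the pulse bilinear operator.) For all Schwartz functions u, v ∈ 𝒮(ℝ) and all θ ∈ ℝ: 𝔽_pul(u, v')(θ) = −(1/δ₃) · u(θ) · v(θ) − (δ₁/δ₃) · 𝔽_pul(u', v)(θ), where ' denotes the derivative d/dθ. -/

import Mathlib

open MeasureTheory Filter Set

lemma aux_integrable (f : SchwartzMap ℝ ℂ) (θ a : ℝ) (ha : a ≠ 0) :
    Integrable (fun X : ℝ => f (θ + a * X)) := by
  have h1 : Integrable (fun y : ℝ => f (θ + y)) := f.integrable.comp_add_left θ
  exact h1.comp_mul_left' ha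

lemma aux_tendsto (f : SchwartzMap ℝ ℂ) (θ a : ℝ) (ha : a ≠ 0) :
    Tendsto (fun X : ℝ => f (θ + a * X)) atTop (nhds 0) := by
  have h0 : Tendsto (⇑f) (cocompact ℝ) (nhds 0) := f.toZeroAtInfty.zero_at_infty'
  have haff : Tendsto (fun X : ℝ => θ + a * X) atTop (cocompact ℝ) := by
    rcases ha.lt_or_gt with h | h
    · have : Tendsto (fun X : ℝ => θ + a * X) atTop atBot := by
        apply Filter.tendsto_atBot_add_const_left
        exact Filter.Tendsto.const_mul_atTop_of_neg h tendsto_id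
      exact this.mono_right (by rw [cocompact_eq_atBot_atTop]; exact le_sup_left)
    · have : Tendsto (fun X : ℝ => θ + a * X) atTop atTop := by
        apply Filter.tendsto_atTop_add_const_left
        exact Filter.Tendsto.const_mul_atTop h tendsto_id
      exact this.mono_right (by rw [cocompact_eq_atBot_atTop]; exact le_sup_right)
  exact h0.comp haff

theorem stmt11 (δ₁ δ₃ : ℝ) (hδ₁ : δ₁ ≠ 0) (hδ₃ : δ₃ = 1 + δ₁) (hδ₃' : δ₃ ≠ 0)
    (u v : SchwartzMap ℝ ℂ) (θ : ℝ) :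
    (∫ X in Set.Ioi (0 : ℝ), u (θ + δ₁ * X) * deriv (⇑v) (θ + δ₃ * X)) =
      -(1 / (δ₃ : ℂ)) * (u θ * v θ) -
        ((δ₁ : ℂ) / (δ₃ : ℂ)) *
          ∫ X in Set.Ioi (0 : ℝ), deriv (⇑u) (θ + δ₁ * X) * v (θ + δ₃ * X) := by
  set u' : SchwartzMap ℝ ℂ := SchwartzMap.derivCLM ℝ ℂ u with hu'
  set v' : SchwartzMap ℝ ℂ := SchwartzMap.derivCLM ℝ ℂ v with hv'
  have hu'eq : (⇑u') = deriv (⇑u) := by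
    funext x; exact SchwartzMap.derivCLM_apply ℝ u x
  have hv'eq : (⇑v') = deriv (⇑v) := by
    funext x; exact SchwartzMap.derivCLM_apply ℝ v x
  -- bounds
  obtain ⟨Cu, hCu⟩ : ∃ C, ∀ x, ‖u x‖ ≤ C :=
    ⟨‖u.toBoundedContinuousFunction‖, fun x => by
      simpa using u.toBoundedContinuousFunction.norm_coe_le_norm x⟩
  obtain ⟨Cu', hCu'⟩ : ∃ C, ∀ x, ‖deriv (⇑u) x‖ ≤ C :=
    ⟨‖u'.toBoundedContinuousFunction‖, fun x => by
      rw [← hu'eq]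
      simpa using u'.toBoundedContinuousFunction.norm_coe_le_norm x⟩
  -- integrability
  have hI1 : Integrable (fun X : ℝ => deriv (⇑u) (θ + δ₁ * X) * v (θ + δ₃ * X)) := by
    refine (aux_integrable v θ δ₃ hδ₃').bdd_mul ?_ (c := Cu') (Filter.Eventually.of_forall fun x => hCu' _)
    have hc : Continuous fun X : ℝ => deriv (⇑u) (θ + δ₁ * X) := by
      rw [← hu'eq]
      exact u'.continuous.comp (by continuity)
    exact hc.aestronglyMeasurable
  have hI2 : Integrable (fun X : ℝ => u (θ + δ₁ * X) * deriv (⇑v) (θ + δ₃ * X)) := by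
    have : Integrable (fun X : ℝ => v' (θ + δ₃ * X)) := aux_integrable v' θ δ₃ hδ₃'
    rw [hv'eq] at this
    refine this.bdd_mul ?_ (c := Cu) (Filter.Eventually.of_forall fun x => hCu _)
    exact (u.continuous.comp (by continuity : Continuous fun X : ℝ => θ + δ₁ * X)).aestronglyMeasurable
  -- derivative of the product
  have hderiv : ∀ X ∈ Ici (0 : ℝ),
      HasDerivAt (fun X : ℝ => u (θ + δ₁ * X) * v (θ + δ₃ * X))
        (δ₁ • (deriv (⇑u) (θ + δ₁ * X) * v (θ + δ₃ * X)) +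
          δ₃ • (u (θ + δ₁ * X) * deriv (⇑v) (θ + δ₃ * X))) X := by
    intro X _
    have haff1 : HasDerivAt (fun X : ℝ => θ + δ₁ * X) δ₁ X := by
      simpa using ((hasDerivAt_id X).const_mul δ₁).const_add θ
    have haff3 : HasDerivAt (fun X : ℝ => θ + δ₃ * X) δ₃ X := by
      simpa using ((hasDerivAt_id X).const_mul δ₃).const_add θ
    have hA : HasDerivAt (fun X : ℝ => u (θ + δ₁ * X)) (δ₁ • deriv (⇑u) (θ + δ₁ * X)) X :=
      (u.differentiableAt.hasDerivAt).scomp X haff1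
    have hB : HasDerivAt (fun X : ℝ => v (θ + δ₃ * X)) (δ₃ • deriv (⇑v) (θ + δ₃ * X)) X :=
      (v.differentiableAt.hasDerivAt).scomp X haff3
    have := hA.fun_mul hB
    refine this.congr_deriv ?_
    simp only [Complex.real_smul]
    ring
  -- limit at infinity
  have htend : Tendsto (fun X : ℝ => u (θ + δ₁ * X) * v (θ + δ₃ * X)) atTop (nhds 0) := by
    have hv0 : Tendsto (fun X : ℝ => v (θ + δ₃ * X)) atTop (nhds 0) :=
      aux_tendsto v θ δ₃ hδ₃'
    have hbound : Tendsto (fun X : ℝ => Cu * ‖v (θ + δ₃ * X)‖) atTop (nhds 0) := by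
      simpa using (hv0.norm.const_mul Cu)
    apply squeeze_zero_norm _ hbound
    intro X
    rw [norm_mul]
    exact mul_le_mul_of_nonneg_right (hCu _) (norm_nonneg _)
  -- FTC
  have key := integral_Ioi_of_hasDerivAt_of_tendsto' hderiv
    ((hI1.smul δ₁).add (hI2.smul δ₃)).integrableOn htend
  simp only [mul_zero, add_zero, zero_sub] at key
  have h1 : IntegrableOn (fun X : ℝ => δ₁ • (deriv (⇑u) (θ + δ₁ * X) * v (θ + δ₃ * X)))
      (Ioi (0:ℝ)) volume := (hI1.smul δ₁).integrableOn
  have h2 : IntegrableOn (fun X : ℝ => δ₃ • (u (θ + δ₁ * X) * deriv (⇑v) (θ + δ₃ * X)))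
      (Ioi (0:ℝ)) volume := (hI2.smul δ₃).integrableOn
  rw [integral_add h1 h2, integral_smul, integral_smul] at key
  set I1 := ∫ X in Ioi (0:ℝ), deriv (⇑u) (θ + δ₁ * X) * v (θ + δ₃ * X) with hI1def
  set I2 := ∫ X in Ioi (0:ℝ), u (θ + δ₁ * X) * deriv (⇑v) (θ + δ₃ * X) with hI2def
  have key' : (δ₁ : ℂ) * I1 + (δ₃ : ℂ) * I2 = -(u θ * v θ) := by
    rw [← Complex.real_smul, ← Complex.real_smul]
    exact key
  have hδ₃c : (δ₃ : ℂ) ≠ 0 := by exact_mod_cast hδ₃'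
  have hI2val : (δ₃ : ℂ) * I2 = -(u θ * v θ) - (δ₁ : ℂ) * I1 := by linear_combination key'
  have hrw : I2 = (δ₃ : ℂ)⁻¹ * ((δ₃ : ℂ) * I2) := by
    rw [← mul_assoc, inv_mul_cancel₀ hδ₃c, one_mul]
  show I2 = _
  rw [hrw, hI2val]
  ring
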